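/- For K ≥ 2 and Δ > 0, consider the equal-gap bandit optimization T⋆ = min over w in the open simplex of (1/Δ²) max_{a ≠ a⋆} (1/w_a + 1/w_{a⋆}), where all K-1 suboptimal arms have gap Δ. The optimal allocation is w_{a⋆} = √(K-1)/(√(K-1) + K - 1) and w_a = 1/(√(K-1) + K - 1) for a ≠ a⋆, and the optimal value is T⋆ = (1 + √(K-1))²/Δ². -/

import Mathlib

/-- Equal-gap objective `(1/Δ²) max_{a ≠ a⋆} (1/w_a + 1/w_{a⋆})`. -/
noncomputable def eqGapObj (K : ℕ) (astar : Fin K) (Δ : ℝ) (w : Fin K → ℝ) : ℝ :=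
  (1/Δ^2) * sSup {x | ∃ a, a ≠ astar ∧ x = 1/(w a) + 1/(w astar)}

/-- Equal-gap unconstrained optimum: `w_{a⋆} = √(K-1)/(√(K-1)+K-1)`,
`w_a = 1/(√(K-1)+K-1)` otherwise, with optimal value `(1+√(K-1))²/Δ²`. -/
theorem stmt5 (K : ℕ) (hK : 2 ≤ K) (Δ : ℝ) (hΔ : 0 < Δ) (astar : Fin K) :
    let wopt : Fin K → ℝ := fun a => if a = astar
      then Real.sqrt ((K:ℝ)-1) / (Real.sqrt ((K:ℝ)-1) + ((K:ℝ)-1))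
      else 1 / (Real.sqrt ((K:ℝ)-1) + ((K:ℝ)-1))
    ((∀ a, 0 < wopt a) ∧ ∑ a, wopt a = 1) ∧
    eqGapObj K astar Δ wopt = (1 + Real.sqrt ((K:ℝ)-1))^2 / Δ^2 ∧
    ∀ w : Fin K → ℝ, (∀ a, 0 < w a) → ∑ a, w a = 1 →
      eqGapObj K astar Δ wopt ≤ eqGapObj K astar Δ w := by
  intro wopt
  have hK1 : (1:ℝ) ≤ (K:ℝ) - 1 := by
    have : (2:ℝ) ≤ (K:ℝ) := by exact_mod_cast hK
    linarith
  set s := Real.sqrt ((K:ℝ)-1) with hs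
  have hs1 : 1 ≤ s := by
    rw [show (1:ℝ) = Real.sqrt 1 by simp]
    exact Real.sqrt_le_sqrt hK1
  have hs0 : (0:ℝ) < s := lt_of_lt_of_le one_pos hs1
  have hs2 : s^2 = (K:ℝ) - 1 := Real.sq_sqrt (by linarith)
  have hd : 0 < s + ((K:ℝ)-1) := by nlinarith
  have hdne : s + ((K:ℝ)-1) ≠ 0 := ne_of_gt hd
  have hwstar : wopt astar = s / (s + ((K:ℝ)-1)) := by simp [wopt, hs]
  have hwother : ∀ a, a ≠ astar → wopt a = 1 / (s + ((K:ℝ)-1)) := by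
    intro a ha; simp [wopt, ha, hs]
  have hpos : ∀ a, 0 < wopt a := by
    intro a
    by_cases ha : a = astar
    · rw [ha, hwstar]; positivity
    · rw [hwother a ha]; positivity
  have hcard : (Finset.univ.erase astar).card = K - 1 := by
    simp [Finset.card_erase_of_mem]
  have hcast : ((K - 1 : ℕ) : ℝ) = (K:ℝ) - 1 := by
    have h1 : (1:ℕ) ≤ K := by omega
    push_cast [Nat.cast_sub h1]
    ring
  have hsum : ∑ a, wopt a = 1 := by
    rw [← Finset.add_sum_erase _ _ (Finset.mem_univ astar),
      Finset.sum_congr rfl (fun a ha => hwother a (Finset.ne_of_mem_erase ha)),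
      Finset.sum_const, hcard, nsmul_eq_mul, hcast, hwstar]
    field_simp
  -- value at wopt
  have hval : eqGapObj K astar Δ wopt = (1 + s)^2 / Δ^2 := by
    have hone : 1 < Fintype.card (Fin K) := by simp; omega
    have hcalc : ∀ a, a ≠ astar → 1/(wopt a) + 1/(wopt astar) = (1+s)^2 := by
      intro a ha
      rw [hwother a ha, hwstar, ← hs2]
      field_simp
      ring
    have hset : {x | ∃ a, a ≠ astar ∧ x = 1/(wopt a) + 1/(wopt astar)} = {(1+s)^2} := by
      ext x
      simp only [Set.mem_setOf_eq, Set.mem_singleton_iff]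
      constructor
      · rintro ⟨a, ha, rfl⟩
        exact hcalc a ha
      · intro hx
        obtain ⟨a0, ha0⟩ := Fintype.exists_ne_of_one_lt_card hone astar
        exact ⟨a0, ha0, by rw [hcalc a0 ha0, hx]⟩
    rw [eqGapObj, hset, csSup_singleton]
    ring
  refine ⟨⟨hpos, hsum⟩, hval, ?_⟩
  intro w hw hsumw
  rw [hval]
  -- minimal suboptimal arm
  have hne : (Finset.univ.erase astar).Nonempty := by
    rw [← Finset.card_pos, hcard]; omega
  obtain ⟨a0, ha0mem, ha0min⟩ := Finset.exists_min_image (Finset.univ.erase astar) w hne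
  have ha0ne : a0 ≠ astar := Finset.ne_of_mem_erase ha0mem
  have hsum' : ∑ a ∈ Finset.univ.erase astar, w a = 1 - w astar := by
    have := Finset.add_sum_erase _ w (Finset.mem_univ astar)
    rw [hsumw] at this
    linarith
  have hlb : ((K:ℝ)-1) * w a0 ≤ 1 - w astar := by
    have h1 : (Finset.univ.erase astar).card • w a0 ≤ ∑ a ∈ Finset.univ.erase astar, w a :=
      Finset.card_nsmul_le_sum _ _ _ ha0min
    rw [hcard, nsmul_eq_mul, hcast, hsum'] at h1
    exact h1
  set t := w astar with htdef
  set u := w a0 with hudef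
  have ht : 0 < t := hw astar
  have hu : 0 < u := hw a0
  have hlb' : s^2 * u ≤ 1 - t := by rw [hs2]; exact hlb
  have h1t : t < 1 := by nlinarith
  have key : (1+s)^2 ≤ 1/u + 1/t := by
    rw [div_add_div _ _ (ne_of_gt hu) (ne_of_gt ht), le_div_iff₀ (mul_pos hu ht)]
    nlinarith [sq_nonneg ((1+s)*t - 1), mul_pos hu ht, mul_nonneg (mul_nonneg hu.le ht.le) hs0.le,
      mul_le_mul_of_nonneg_right hlb' ht.le]
  have hSfin : Set.Finite {x | ∃ a, a ≠ astar ∧ x = 1/(w a) + 1/(w astar)} := by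
    apply Set.Finite.subset (Set.finite_range (fun a => 1/(w a) + 1/(w astar)))
    rintro x ⟨a, _, rfl⟩
    exact ⟨a, rfl⟩
  have hmem : (1/u + 1/t) ∈ {x | ∃ a, a ≠ astar ∧ x = 1/(w a) + 1/(w astar)} :=
    ⟨a0, ha0ne, rfl⟩
  have hsup : (1+s)^2 ≤ sSup {x | ∃ a, a ≠ astar ∧ x = 1/(w a) + 1/(w astar)} :=
    le_trans key (le_csSup hSfin.bddAbove hmem)
  rw [eqGapObj, show (1+s)^2 / Δ^2 = 1/Δ^2 * (1+s)^2 from by ring]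
  exact mul_le_mul_of_nonneg_left hsup (by positivity)
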